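/- arXiv:2604.19481 — 4 statements merged into one kernel-verified Lean document; each statement's English description precedes it below -/
import Mathlib

section
/- Let ψ = c₀|0⟩ + c₁|1⟩ ∈ ℂ² and define the two-qubit state |η⟩ = c₀ |0⟩ ⊗ (SH|0⟩) + e^{iπ/4} c₁ |1⟩ ⊗ (SH|1⟩) ∈ ℂ²⊗ℂ². Then projecting the second qubit onto the X basis gives: (I ⊗ ⟨+|)|η⟩ = ((1+i)/2) · T†ψ, and (I ⊗ ⟨−|)|η⟩ = ((1−i)/2) · Z T† ψ. Hence measuring the second qubit in the X basis, followed by a Z correction on the first qubit conditioned on the outcome −, leaves the first qubit in the state T†ψ up to a nonzero scalar independent of ψ. -/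
open Matrix

noncomputable section

/-- The computational basis state `|a⟩` of a qubit `ℂ²`. -/
def ket (a : Fin 2) : Fin 2 → ℂ := fun b => if b = a then 1 else 0

/-- Tensor (Kronecker) product of two single-qubit state vectors, as a vector of
`ℂ² ⊗ ℂ² ≅ ℂ⁴`. -/
def tensorVec (ψ φ : Fin 2 → ℂ) : Fin 2 × Fin 2 → ℂ := fun p => ψ p.1 * φ p.2

/-- The Pauli `Z` gate. -/
def gateZ : Matrix (Fin 2) (Fin 2) ℂ := !![1, 0; 0, -1]

/-- The phase gate `S = diag(1, i)`. -/
def gateS : Matrix (Fin 2) (Fin 2) ℂ := !![1, 0; 0, Complex.I]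

/-- The Hadamard gate `H`. -/
def gateH : Matrix (Fin 2) (Fin 2) ℂ := (Real.sqrt 2 : ℂ)⁻¹ • !![1, 1; 1, -1]

/-- The gate `T† = diag(1, e^{−iπ/4})`. -/
def gateTdag : Matrix (Fin 2) (Fin 2) ℂ :=
  !![1, 0; 0, Complex.exp (-(Real.pi * Complex.I / 4))]

/-- The X-basis state `|+⟩ = (|0⟩+|1⟩)/√2`. -/
def ketPlus : Fin 2 → ℂ := fun _ => (Real.sqrt 2 : ℂ)⁻¹

/-- The X-basis state `|−⟩ = (|0⟩−|1⟩)/√2`. -/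
def ketMinus : Fin 2 → ℂ := fun b => (Real.sqrt 2 : ℂ)⁻¹ * (-1 : ℂ) ^ (b : ℕ)

/-- Applying the bra `⟨φ|` to the second tensor factor of a two-qubit state:
`(I ⊗ ⟨φ|) v`. -/
def braSecond (φ : Fin 2 → ℂ) (v : Fin 2 × Fin 2 → ℂ) : Fin 2 → ℂ :=
  fun a => ∑ b : Fin 2, (starRingEnd ℂ) (φ b) * v (a, b)

set_option maxHeartbeats 1000000

/-- Let `ψ = c₀|0⟩ + c₁|1⟩ ∈ ℂ²` and define the two-qubit state
`|η⟩ = c₀ |0⟩ ⊗ (SH|0⟩) + e^{iπ/4} c₁ |1⟩ ⊗ (SH|1⟩) ∈ ℂ²⊗ℂ²`.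
Then projecting the second qubit onto the X basis gives
`(I ⊗ ⟨+|)|η⟩ = ((1+i)/2) · T†ψ` and `(I ⊗ ⟨−|)|η⟩ = ((1−i)/2) · Z T† ψ`.
Hence measuring the second qubit in the X basis, followed by a `Z` correction on the first
qubit conditioned on the outcome `−`, leaves the first qubit in the state `T†ψ` up to a
nonzero scalar independent of `ψ`. -/
theorem disentangling_step_of_measurement_based_Tdagger (c₀ c₁ : ℂ) :
    let ψ : Fin 2 → ℂ := ![c₀, c₁]
    let η : Fin 2 × Fin 2 → ℂ :=
      c₀ • tensorVec (ket 0) ((gateS * gateH).mulVec (ket 0)) +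
      (Complex.exp (Real.pi * Complex.I / 4) * c₁) •
        tensorVec (ket 1) ((gateS * gateH).mulVec (ket 1))
    braSecond ketPlus η = ((1 + Complex.I) / 2) • gateTdag.mulVec ψ ∧
    braSecond ketMinus η = ((1 - Complex.I) / 2) • gateZ.mulVec (gateTdag.mulVec ψ) := by
  have h2r : Real.sqrt 2 * Real.sqrt 2 = 2 := Real.mul_self_sqrt (by norm_num)
  have h2 : (Real.sqrt 2 : ℂ) * (Real.sqrt 2 : ℂ) = 2 := by
    rw [← Complex.ofReal_mul, h2r]; norm_num
  have hne : (Real.sqrt 2 : ℂ) ≠ 0 := by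
    intro h; rw [h, mul_zero] at h2; norm_num at h2
  have hz : Complex.exp (Real.pi * Complex.I / 4) =
      (Real.sqrt 2 : ℂ)⁻¹ * (1 + Complex.I) := by
    have hx : (Real.pi * Complex.I / 4) = (Real.pi / 4 : ℝ) * Complex.I := by
      push_cast; ring
    rw [hx, Complex.exp_mul_I, ← Complex.ofReal_cos, ← Complex.ofReal_sin,
      Real.cos_pi_div_four, Real.sin_pi_div_four]
    field_simp
    push_cast
    linear_combination ((1 + Complex.I) / 2) * h2
  have hz' : Complex.exp (-(Real.pi * Complex.I / 4)) =
      (Real.sqrt 2 : ℂ)⁻¹ * (1 - Complex.I) := by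
    have hx : (-(Real.pi * Complex.I / 4)) = (-(Real.pi / 4) : ℝ) * Complex.I := by
      push_cast; ring
    rw [hx, Complex.exp_mul_I, ← Complex.ofReal_cos, ← Complex.ofReal_sin,
      Real.cos_neg, Real.sin_neg, Real.cos_pi_div_four, Real.sin_pi_div_four]
    field_simp
    push_cast
    linear_combination ((1 - Complex.I) / 2) * h2
  have hSH : gateS * gateH = (Real.sqrt 2 : ℂ)⁻¹ • !![1, 1; Complex.I, -Complex.I] := by
    ext i j
    fin_cases i <;> fin_cases j <;>
      · simp [gateS, gateH, Matrix.mul_apply, Fin.sum_univ_two]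
        try ring
  have hv0 : (gateS * gateH).mulVec (ket 0) = fun b => (Real.sqrt 2 : ℂ)⁻¹ * ![1, Complex.I] b := by
    funext b
    fin_cases b <;> simp [hSH, ket, Matrix.mulVec, dotProduct, Fin.sum_univ_two]
  have hv1 : (gateS * gateH).mulVec (ket 1) = fun b => (Real.sqrt 2 : ℂ)⁻¹ * ![1, -Complex.I] b := by
    funext b
    fin_cases b <;> simp [hSH, ket, Matrix.mulVec, dotProduct, Fin.sum_univ_two]
  refine ⟨?_, ?_⟩ <;>
  · funext a
    fin_cases a <;>
    · simp only [braSecond, ketPlus, ketMinus, ket, tensorVec, gateZ, gateTdag, hv0, hv1, hz, hz',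
        Matrix.mulVec, dotProduct, Fin.sum_univ_two, Pi.add_apply, Pi.smul_apply,
        smul_eq_mul, Matrix.cons_val_zero, Matrix.cons_val_one, Matrix.head_cons,
        Matrix.cons_val', Matrix.empty_val', Matrix.cons_val_fin_one, Matrix.head_fin_const,
        Fin.isValue, map_inv₀, Complex.conj_ofReal, _root_.map_mul, map_pow, _root_.map_neg, _root_.map_one,
        Fin.val_zero, Fin.val_one, pow_zero, pow_one]
      norm_num [Fin.ext_iff]
      field_simp
      ring_nf
      try simp only [Complex.I_sq]
      try ring_nf
      first
      | linear_combination (-(c₀ + c₀ * Complex.I)) * h2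
      | linear_combination (c₀ * Complex.I - c₀) * h2
      | linear_combination (-2 * c₁ * (Real.sqrt 2 : ℂ)) * h2
      | linear_combination (-2 * Complex.I * c₁ * (Real.sqrt 2 : ℂ)) * h2
      | linear_combination (-2 * c₁) * h2
      | linear_combination (-2 * Complex.I * c₁) * h2
end
end

section
/- Let ψ = c₀|0⟩ + c₁|1⟩ ∈ ℂ² be arbitrary. For each pair of measurement outcomes (s, t) ∈ {0,1}², define the (unnormalized) branch vector v_{s,t}(ψ) = (I ⊗ ⟨x_t|) (I ⊗ SH) (S^s ⊗ X^s) ((I₄ + (−1)^s Z⊗Z)/2) (ψ ⊗ |T⟩) ∈ ℂ², where |x₀⟩ = |+⟩ and |x₁⟩ = |−⟩. Then for every (s, t) there exists a nonzero complex scalar λ_{s,t}, independent of ψ, such that Z^t v_{s,t}(ψ) = λ_{s,t} · T† ψ. In other words, the measurement sequence: Z⊗Z measurement on ψ⊗|T⟩, conditional Clifford S⊗X on outcome −1, basis change SH on the ancilla, X-basis measurement of the ancilla, and conditional Z correction on outcome −, implements the T† gate on ψ in every measurement branch. -/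
open Matrix Kronecker

noncomputable section

/-- The Pauli `X` gate. -/
def gateX : Matrix (Fin 2) (Fin 2) ℂ := !![0, 1; 1, 0]

/-- The magic state `|T⟩ = (|0⟩ + e^{iπ/4}|1⟩)/√2`. -/
def ketT : Fin 2 → ℂ :=
  fun b => if b = 0 then (Real.sqrt 2 : ℂ)⁻¹
           else Complex.exp (Real.pi * Complex.I / 4) * (Real.sqrt 2 : ℂ)⁻¹

/-- The X-basis states `|x₀⟩ = |+⟩` and `|x₁⟩ = |−⟩`. -/
def xket (t : Fin 2) : Fin 2 → ℂ :=
  fun b => (Real.sqrt 2 : ℂ)⁻¹ * (-1 : ℂ) ^ ((t : ℕ) * (b : ℕ))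

/-- The projector `P_s = (I₄ + (−1)^s Z⊗Z)/2` onto the `(−1)^s`-eigenspace of `Z ⊗ Z`. -/
def projZZ (s : Fin 2) : Matrix (Fin 2 × Fin 2) (Fin 2 × Fin 2) ℂ :=
  (2 : ℂ)⁻¹ • (1 + ((-1 : ℂ) ^ (s : ℕ)) • (gateZ ⊗ₖ gateZ))

/-- The (unnormalized) branch vector
`v_{s,t}(ψ) = (I ⊗ ⟨x_t|) (I ⊗ SH) (S^s ⊗ X^s) ((I₄ + (−1)^s Z⊗Z)/2) (ψ ⊗ |T⟩)`. -/
def branchVec (s t : Fin 2) (ψ : Fin 2 → ℂ) : Fin 2 → ℂ :=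
  braSecond (xket t)
    (((1 : Matrix (Fin 2) (Fin 2) ℂ) ⊗ₖ (gateS * gateH)).mulVec
      (((gateS ^ (s : ℕ)) ⊗ₖ (gateX ^ (s : ℕ))).mulVec
        ((projZZ s).mulVec (tensorVec ψ ketT))))

set_option maxHeartbeats 2000000

private lemma hsqrt2 : (Real.sqrt 2 : ℂ) * (Real.sqrt 2 : ℂ) = 2 := by
  norm_cast
  exact Real.mul_self_sqrt (by norm_num)

private lemma hsqrt2_ne : (Real.sqrt 2 : ℂ) ≠ 0 := by
  simpa using Real.sqrt_ne_zero'.2 (by norm_num : (0:ℝ) < 2)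

private lemma hE2 : Complex.exp (Real.pi * Complex.I / 4) *
    Complex.exp (Real.pi * Complex.I / 4) = Complex.I := by
  rw [← Complex.exp_add]
  have : Real.pi * Complex.I / 4 + Real.pi * Complex.I / 4
      = (Real.pi / 2 : ℝ) * Complex.I := by push_cast; ring
  rw [this, Complex.exp_mul_I]
  simp

private lemma hEval : Complex.exp (Real.pi * Complex.I / 4)
    = (1 + Complex.I) * (Real.sqrt 2 : ℂ)⁻¹ := by
  have : Real.pi * Complex.I / 4 = (Real.pi / 4 : ℝ) * Complex.I := by push_cast; ring
  rw [this, Complex.exp_mul_I, ← Complex.ofReal_cos, ← Complex.ofReal_sin,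
    Real.cos_pi_div_four, Real.sin_pi_div_four]
  have h2n := hsqrt2_ne
  have h2 := hsqrt2
  push_cast
  field_simp
  linear_combination (1 + Complex.I) * h2

private lemma hEneg : Complex.exp (-(Real.pi * Complex.I / 4))
    = -Complex.I * Complex.exp (Real.pi * Complex.I / 4) := by
  have h := Complex.exp_ne_zero (Real.pi * Complex.I / 4)
  rw [Complex.exp_neg]
  refine (eq_inv_of_mul_eq_one_left ?_).symm
  rw [mul_assoc, hE2]
  simp [Complex.I_mul_I]

/-- Let `ψ = c₀|0⟩ + c₁|1⟩ ∈ ℂ²` be arbitrary.  For each pair of measurement outcomes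
`(s, t) ∈ {0,1}²`, consider the (unnormalized) branch vector
`v_{s,t}(ψ) = (I ⊗ ⟨x_t|) (I ⊗ SH) (S^s ⊗ X^s) ((I₄ + (−1)^s Z⊗Z)/2) (ψ ⊗ |T⟩) ∈ ℂ²`,
where `|x₀⟩ = |+⟩` and `|x₁⟩ = |−⟩`.  Then for every `(s, t)` there exists a nonzero
complex scalar `λ_{s,t}`, independent of `ψ`, such that
`Z^t v_{s,t}(ψ) = λ_{s,t} · T† ψ`.  In other words, the measurement sequence
(Z⊗Z measurement on `ψ⊗|T⟩`, conditional Clifford `S⊗X` on outcome `−1`, basis change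
`SH` on the ancilla, X-basis measurement of the ancilla, and conditional `Z` correction on
outcome `−`) implements the `T†` gate on `ψ` in every measurement branch. -/
theorem measurement_based_Tdagger_gate :
    ∀ s t : Fin 2, ∃ lam : ℂ, lam ≠ 0 ∧
      ∀ c₀ c₁ : ℂ,
        (gateZ ^ (t : ℕ)).mulVec (branchVec s t ![c₀, c₁])
          = lam • gateTdag.mulVec ![c₀, c₁] := by
  have h2 := hsqrt2
  have h2n := hsqrt2_ne
  have hinv : (Real.sqrt 2 : ℂ) * (Real.sqrt 2 : ℂ)⁻¹ = 1 := mul_inv_cancel₀ hsqrt2_ne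
  intro s t
  fin_cases s <;> fin_cases t
  · refine ⟨Complex.exp (Real.pi * Complex.I / 4) / 2, by simp [Complex.exp_ne_zero], fun c₀ c₁ => ?_⟩
    funext k
    fin_cases k
    · simp [branchVec, braSecond, xket, projZZ, tensorVec, ketT, gateS, gateH, gateX, gateZ,
        gateTdag, mulVec, dotProduct, Fintype.sum_prod_type, Fin.sum_univ_two,
        Matrix.one_apply, kroneckerMap_apply, Matrix.mul_apply, Matrix.add_apply,
        Matrix.smul_apply, pow_zero, pow_one, hEneg, hEval]
      field_simp
      linear_combination ((-1)*(Real.sqrt 2:ℂ)*c₀ + (-1)*Complex.I*(Real.sqrt 2:ℂ)*c₀) * h2 + ((-1)*Complex.I^1*c₀^1 + (1)*Complex.I^1*(Real.sqrt 2:ℂ)^1*c₀^1 + (-1)*c₀^1 + (1)*(Real.sqrt 2:ℂ)^1*c₀^1) * h2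
    · simp [branchVec, braSecond, xket, projZZ, tensorVec, ketT, gateS, gateH, gateX, gateZ,
        gateTdag, mulVec, dotProduct, Fintype.sum_prod_type, Fin.sum_univ_two,
        Matrix.one_apply, kroneckerMap_apply, Matrix.mul_apply, Matrix.add_apply,
        Matrix.smul_apply, pow_zero, pow_one, hEneg, hEval]
      field_simp
      linear_combination ((-2)*(Real.sqrt 2:ℂ)^2*c₁ + (2)*(Real.sqrt 2:ℂ)^4*c₁ + Complex.I*(Real.sqrt 2:ℂ)^4*c₁) * Complex.I_sq + ((-2)*(Real.sqrt 2:ℂ)^2*c₁) * h2 + ((-2)*c₁^1 + (4)*(Real.sqrt 2:ℂ)^2*c₁^1 + (-2)*(Real.sqrt 2:ℂ)^4*c₁^1 + (1)*Complex.I^1*(Real.sqrt 2:ℂ)^2*c₁^1 + (-1)*Complex.I^1*(Real.sqrt 2:ℂ)^4*c₁^1) * Complex.I_sq + ((-2)*c₁^1 + (2)*(Real.sqrt 2:ℂ)^2*c₁^1) * h2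
  · refine ⟨-Complex.I * Complex.exp (Real.pi * Complex.I / 4) / 2, by simp [Complex.exp_ne_zero, Complex.I_ne_zero], fun c₀ c₁ => ?_⟩
    funext k
    fin_cases k
    · simp [branchVec, braSecond, xket, projZZ, tensorVec, ketT, gateS, gateH, gateX, gateZ,
        gateTdag, mulVec, dotProduct, Fintype.sum_prod_type, Fin.sum_univ_two,
        Matrix.one_apply, kroneckerMap_apply, Matrix.mul_apply, Matrix.add_apply,
        Matrix.smul_apply, pow_zero, pow_one, hEneg, hEval]
      field_simp
      linear_combination ((Real.sqrt 2:ℂ)^3*c₀) * Complex.I_sq + ((-1)*(Real.sqrt 2:ℂ)*c₀ + Complex.I*(Real.sqrt 2:ℂ)*c₀) * h2 + ((1)*(Real.sqrt 2:ℂ)^2*c₀^1 + (-1)*(Real.sqrt 2:ℂ)^3*c₀^1) * Complex.I_sq + ((1)*Complex.I^1*c₀^1 + (-1)*Complex.I^1*(Real.sqrt 2:ℂ)^1*c₀^1 + (-1)*c₀^1 + (1)*(Real.sqrt 2:ℂ)^1*c₀^1) * h2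
    · simp [branchVec, braSecond, xket, projZZ, tensorVec, ketT, gateS, gateH, gateX, gateZ,
        gateTdag, mulVec, dotProduct, Fintype.sum_prod_type, Fin.sum_univ_two,
        Matrix.one_apply, kroneckerMap_apply, Matrix.mul_apply, Matrix.add_apply,
        Matrix.smul_apply, pow_zero, pow_one, hEneg, hEval]
      field_simp
      linear_combination ((-2)*(Real.sqrt 2:ℂ)⁻¹^2*c₁ + (-2)*Complex.I*c₁ + (-1)*Complex.I^2*c₁) * Complex.I_sq + ((2)*Complex.I*(Real.sqrt 2:ℂ)⁻¹^2*c₁) * h2 + ((-2)*(Real.sqrt 2:ℂ)⁻¹^2*c₁ + (-2)*(Real.sqrt 2:ℂ)*(Real.sqrt 2:ℂ)⁻¹^3*c₁ + (-2)*(Real.sqrt 2:ℂ)^2*(Real.sqrt 2:ℂ)⁻¹^4*c₁ + (-2)*(Real.sqrt 2:ℂ)^3*(Real.sqrt 2:ℂ)⁻¹^5*c₁ + (-2)*(Real.sqrt 2:ℂ)^4*(Real.sqrt 2:ℂ)⁻¹^6*c₁ + (-2)*(Real.sqrt 2:ℂ)^5*(Real.sqrt 2:ℂ)⁻¹^7*c₁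 + (-4)*Complex.I*(Real.sqrt 2:ℂ)⁻¹^2*c₁ + (-4)*Complex.I*(Real.sqrt 2:ℂ)*(Real.sqrt 2:ℂ)⁻¹^3*c₁ + (-4)*Complex.I*(Real.sqrt 2:ℂ)^2*(Real.sqrt 2:ℂ)⁻¹^4*c₁ + (-4)*Complex.I*(Real.sqrt 2:ℂ)^3*(Real.sqrt 2:ℂ)⁻¹^5*c₁ + (-4)*Complex.I*(Real.sqrt 2:ℂ)^4*(Real.sqrt 2:ℂ)⁻¹^6*c₁ + (-4)*Complex.I*(Real.sqrt 2:ℂ)^5*(Real.sqrt 2:ℂ)⁻¹^7*c₁ + (-2)*Complex.I^2*(Real.sqrt 2:ℂ)⁻¹^2*c₁ + (-2)*Complex.I^2*(Real.sqrt 2:ℂ)*(Real.sqrt 2:ℂ)⁻¹^3*c₁ + (-2)*Complex.I^2*(Real.sqrt 2:ℂ)^2*(Real.sqrt 2:ℂ)⁻¹^4*c₁ + (-2)*Complex.I^2*(Real.sqrt 2:ℂ)^3*(Real.sqrt 2:ℂ)⁻¹^5*c₁ + (-2)*Complex.I^2*(Real.sqrt 2:ℂ)^4*(Real.sqrt 2:ℂ)⁻¹^6*c₁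 + (-2)*Complex.I^2*(Real.sqrt 2:ℂ)^5*(Real.sqrt 2:ℂ)⁻¹^7*c₁ + (-2)*Complex.I*c₁ + (-2)*Complex.I*(Real.sqrt 2:ℂ)*(Real.sqrt 2:ℂ)⁻¹*c₁) * hinv + ((-2)*c₁^1 + (2)*(Real.sqrt 2:ℂ)^6*(Real.sqrt 2:ℂ)⁻¹^8*c₁^1 + (2)*Complex.I^1*c₁^1 + (-2)*Complex.I^1*(Real.sqrt 2:ℂ)^2*c₁^1 + (1)*Complex.I^2*c₁^1 + (-1)*Complex.I^2*(Real.sqrt 2:ℂ)^2*c₁^1) * Complex.I_sq + ((2)*Complex.I^1*c₁^1) * h2 + ((4)*Complex.I^1*(Real.sqrt 2:ℂ)^5*(Real.sqrt 2:ℂ)⁻¹^7*c₁^1 + (4)*Complex.I^1*(Real.sqrt 2:ℂ)^4*(Real.sqrt 2:ℂ)⁻¹^6*c₁^1 + (4)*Complex.I^1*(Real.sqrt 2:ℂ)^3*(Real.sqrt 2:ℂ)⁻¹^5*c₁^1 + (4)*Complex.I^1*(Real.sqrt 2:ℂ)^2*(Real.sqrt 2:ℂ)⁻¹^4*c₁^1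 + (4)*Complex.I^1*(Real.sqrt 2:ℂ)^1*(Real.sqrt 2:ℂ)⁻¹^3*c₁^1 + (4)*Complex.I^1*(Real.sqrt 2:ℂ)⁻¹^2*c₁^1) * hinv + ((-2)*Complex.I*(Real.sqrt 2:ℂ)⁻¹^2*c₁) * h2 + ((2)*Complex.I*c₁*((Real.sqrt 2:ℂ)*(Real.sqrt 2:ℂ)⁻¹ + 1)) * hinv
  · refine ⟨Complex.I / 2, by simp [Complex.I_ne_zero], fun c₀ c₁ => ?_⟩
    funext k
    fin_cases k
    · simp [branchVec, braSecond, xket, projZZ, tensorVec, ketT, gateS, gateH, gateX, gateZ,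
        gateTdag, mulVec, dotProduct, Fintype.sum_prod_type, Fin.sum_univ_two,
        Matrix.one_apply, kroneckerMap_apply, Matrix.mul_apply, Matrix.add_apply,
        Matrix.smul_apply, pow_zero, pow_one, hEneg, hEval]
      field_simp
      linear_combination ((2)*c₀) * Complex.I_sq + ((-2)*Complex.I*c₀ + (-1)*Complex.I*(Real.sqrt 2:ℂ)^2*c₀) * h2
    · simp [branchVec, braSecond, xket, projZZ, tensorVec, ketT, gateS, gateH, gateX, gateZ,
        gateTdag, mulVec, dotProduct, Fintype.sum_prod_type, Fin.sum_univ_two,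
        Matrix.one_apply, kroneckerMap_apply, Matrix.mul_apply, Matrix.add_apply,
        Matrix.smul_apply, pow_zero, pow_one, hEneg, hEval]
      field_simp
      linear_combination ((-2)*(Real.sqrt 2:ℂ)*c₁ + (Real.sqrt 2:ℂ)^3*c₁ + Complex.I*(Real.sqrt 2:ℂ)^3*c₁) * Complex.I_sq + ((-1)*(Real.sqrt 2:ℂ)*c₁ + (-1)*Complex.I*(Real.sqrt 2:ℂ)*c₁) * h2 + ((2)*(Real.sqrt 2:ℂ)^1*c₁^1 + (1)*(Real.sqrt 2:ℂ)^2*c₁^1 + (-1)*(Real.sqrt 2:ℂ)^3*c₁^1 + (-1)*Complex.I^1*(Real.sqrt 2:ℂ)^3*c₁^1) * Complex.I_sq + ((1)*Complex.I^1*c₁^1 + (-1)*c₁^1 + (1)*(Real.sqrt 2:ℂ)^1*c₁^1 + (1)*Complex.I^1*(Real.sqrt 2:ℂ)^1*c₁^1) * h2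
  · refine ⟨1 / 2, by norm_num, fun c₀ c₁ => ?_⟩
    funext k
    fin_cases k
    · simp [branchVec, braSecond, xket, projZZ, tensorVec, ketT, gateS, gateH, gateX, gateZ,
        gateTdag, mulVec, dotProduct, Fintype.sum_prod_type, Fin.sum_univ_two,
        Matrix.one_apply, kroneckerMap_apply, Matrix.mul_apply, Matrix.add_apply,
        Matrix.smul_apply, pow_zero, pow_one, hEneg, hEval]
      field_simp
      linear_combination ((-2)*c₀) * Complex.I_sq + ((-2)*c₀ + (-1)*(Real.sqrt 2:ℂ)^2*c₀) * h2
    · simp [branchVec, braSecond, xket, projZZ, tensorVec, ketT, gateS, gateH, gateX, gateZ,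
        gateTdag, mulVec, dotProduct, Fintype.sum_prod_type, Fin.sum_univ_two,
        Matrix.one_apply, kroneckerMap_apply, Matrix.mul_apply, Matrix.add_apply,
        Matrix.smul_apply, pow_zero, pow_one, hEneg, hEval]
      field_simp
      linear_combination ((-2)*(Real.sqrt 2:ℂ)^4*c₁ + (Real.sqrt 2:ℂ)^6*c₁) * Complex.I_sq + ((-1)*(Real.sqrt 2:ℂ)^4*c₁ + Complex.I*(Real.sqrt 2:ℂ)^4*c₁) * h2 + ((2)*(Real.sqrt 2:ℂ)^4*c₁^1 + (-1)*(Real.sqrt 2:ℂ)^6*c₁^1) * Complex.I_sq + ((1)*Complex.I^1*c₁^1 + (-1)*Complex.I^1*(Real.sqrt 2:ℂ)^4*c₁^1 + (1)*c₁^1 + (1)*(Real.sqrt 2:ℂ)^4*c₁^1) * h2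
end
end

section
/- Over F₂ = ZMod 2, let x = S_ℓ ⊗ I_m and y = I_ℓ ⊗ S_m, and let A and B each be a finite sum of monomials x^a y^b. Then for every i ∈ {0,…,ℓ−1} and j ∈ {0,…,m−1}, the block-diagonal permutation matrix Q = fromBlocks(x^i y^j, 0, 0, x^i y^j) satisfies [A | B] · Q = x^i y^j · [A | B] and [Bᵀ | Aᵀ] · Q = x^i y^j · [Bᵀ | Aᵀ]. Since left multiplication by the permutation matrix x^i y^j merely permutes rows, the (0,i,j) cyclic shift of the data qubits preserves the row spaces of both check matrices H_X = [A | B] and H_Z = [Bᵀ | Aᵀ], and hence is a logical operation of any bivariate bicycle code. -/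
open Matrix Kronecker

noncomputable section

/-- The `k × k` circulant permutation matrix over `F₂ = ZMod 2` whose first row is
`(0,1,0,…,0)`, i.e. `S_k i j = 1` iff `j = i + 1` (cyclically). -/
def cyc (k : ℕ) [NeZero k] : Matrix (Fin k) (Fin k) (ZMod 2) :=
  fun i j => if j = i + 1 then 1 else 0

/-- `x = S_ℓ ⊗ I_m`. -/
def xMat (ℓ m : ℕ) [NeZero ℓ] [NeZero m] :
    Matrix (Fin ℓ × Fin m) (Fin ℓ × Fin m) (ZMod 2) :=
  cyc ℓ ⊗ₖ (1 : Matrix (Fin m) (Fin m) (ZMod 2))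

/-- `y = I_ℓ ⊗ S_m`. -/
def yMat (ℓ m : ℕ) [NeZero ℓ] [NeZero m] :
    Matrix (Fin ℓ × Fin m) (Fin ℓ × Fin m) (ZMod 2) :=
  (1 : Matrix (Fin ℓ) (Fin ℓ) (ZMod 2)) ⊗ₖ cyc m

/-- shift matrix -/
def shiftM (k : ℕ) [NeZero k] (c : Fin k) : Matrix (Fin k) (Fin k) (ZMod 2) :=
  fun i j => if j = i + c then 1 else 0

lemma shiftM_mul (k : ℕ) [NeZero k] (c d : Fin k) :
    shiftM k c * shiftM k d = shiftM k (c + d) := by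
  ext i j
  simp only [shiftM, mul_apply]
  rw [Finset.sum_eq_single (i + c)]
  · simp [add_assoc]
  · intro b _ hb; simp [hb, if_neg (Ne.symm hb)]
  · simp

lemma cyc_eq_shift (k : ℕ) [NeZero k] : cyc k = shiftM k 1 := rfl

lemma cyc_transpose (k : ℕ) [NeZero k] : (cyc k)ᵀ = shiftM k (-1) := by
  ext i j
  simp [cyc, shiftM, ← sub_eq_add_neg, eq_sub_iff_add_eq, eq_comm]


lemma one_eq_shift (k : ℕ) [NeZero k] :
    (1 : Matrix (Fin k) (Fin k) (ZMod 2)) = shiftM k 0 := by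
  ext i j; simp [shiftM, one_apply, eq_comm]

section main
variable (ℓ m : ℕ) [NeZero ℓ] [NeZero m]

lemma kron_shift_comm (a c : Fin ℓ) (b d : Fin m) :
    Commute (shiftM ℓ a ⊗ₖ shiftM m b) (shiftM ℓ c ⊗ₖ shiftM m d) := by
  unfold Commute SemiconjBy
  rw [← Matrix.mul_kronecker_mul, ← Matrix.mul_kronecker_mul, shiftM_mul, shiftM_mul,
    shiftM_mul, shiftM_mul, add_comm a c, add_comm b d]

lemma xMat_eq : xMat ℓ m = shiftM ℓ 1 ⊗ₖ shiftM m 0 := by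
  rw [xMat, cyc_eq_shift, one_eq_shift]

lemma yMat_eq : yMat ℓ m = shiftM ℓ 0 ⊗ₖ shiftM m 1 := by
  rw [yMat, cyc_eq_shift, one_eq_shift]

lemma xMat_t : (xMat ℓ m)ᵀ = shiftM ℓ (-1) ⊗ₖ shiftM m 0 := by
  rw [xMat, ← Matrix.kroneckerMap_transpose, cyc_transpose, transpose_one, one_eq_shift]

lemma yMat_t : (yMat ℓ m)ᵀ = shiftM ℓ 0 ⊗ₖ shiftM m (-1) := by
  rw [yMat, ← Matrix.kroneckerMap_transpose, cyc_transpose, transpose_one, one_eq_shift]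

lemma commute_all (i j : ℕ) (M : Matrix (Fin ℓ × Fin m) (Fin ℓ × Fin m) (ZMod 2))
    (hM : M = shiftM ℓ 1 ⊗ₖ shiftM m 0 ∨ M = shiftM ℓ 0 ⊗ₖ shiftM m 1 ∨
      M = shiftM ℓ (-1) ⊗ₖ shiftM m 0 ∨ M = shiftM ℓ 0 ⊗ₖ shiftM m (-1)) :
    Commute (xMat ℓ m ^ i * yMat ℓ m ^ j) M := by
  have h : ∀ N, (N = shiftM ℓ 1 ⊗ₖ shiftM m 0 ∨ N = shiftM ℓ 0 ⊗ₖ shiftM m 1 ∨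
      N = shiftM ℓ (-1) ⊗ₖ shiftM m 0 ∨ N = shiftM ℓ 0 ⊗ₖ shiftM m (-1)) → Commute N M := by
    rintro N (rfl | rfl | rfl | rfl) <;>
      rcases hM with rfl | rfl | rfl | rfl <;> exact kron_shift_comm ℓ m _ _ _ _
  exact Commute.mul_left
    (((h _ (Or.inl (xMat_eq ℓ m))).pow_left i))
    (((h _ (Or.inr (Or.inl (yMat_eq ℓ m)))).pow_left j))

lemma commute_sum (i j : ℕ) (s : Finset (ℕ × ℕ)) :
    Commute (xMat ℓ m ^ i * yMat ℓ m ^ j)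
      (∑ p ∈ s, xMat ℓ m ^ p.1 * yMat ℓ m ^ p.2) := by
  refine Finset.sum_induction _ _ (fun a b => Commute.add_right) (Commute.zero_right _) ?_
  intro p _
  exact Commute.mul_right
    ((commute_all ℓ m i j _ (Or.inl (xMat_eq ℓ m))).pow_right p.1)
    ((commute_all ℓ m i j _ (Or.inr (Or.inl (yMat_eq ℓ m)))).pow_right p.2)

lemma commute_sum_t (i j : ℕ) (s : Finset (ℕ × ℕ)) :
    Commute (xMat ℓ m ^ i * yMat ℓ m ^ j)
      (∑ p ∈ s, xMat ℓ m ^ p.1 * yMat ℓ m ^ p.2)ᵀ := by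
  rw [transpose_sum]
  refine Finset.sum_induction _ _ (fun a b => Commute.add_right) (Commute.zero_right _) ?_
  intro p _
  rw [transpose_mul, transpose_pow, transpose_pow]
  exact Commute.mul_right
    ((commute_all ℓ m i j _ (Or.inr (Or.inr (Or.inr (yMat_t ℓ m))))).pow_right p.2)
    ((commute_all ℓ m i j _ (Or.inr (Or.inr (Or.inl (xMat_t ℓ m))))).pow_right p.1)

end main

/-- Over `F₂ = ZMod 2`, let `x = S_ℓ ⊗ I_m` and `y = I_ℓ ⊗ S_m`, and let `A` and `B` each be
a finite sum of monomials `x^a y^b`.  Then for every `i ∈ {0,…,ℓ−1}` and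
`j ∈ {0,…,m−1}`, the block-diagonal permutation matrix
`Q = fromBlocks(x^i y^j, 0, 0, x^i y^j)` satisfies
`[A | B] · Q = x^i y^j · [A | B]` and `[Bᵀ | Aᵀ] · Q = x^i y^j · [Bᵀ | Aᵀ]`.
(Since left multiplication by the permutation matrix `x^i y^j` merely permutes rows, the
`(0,i,j)` cyclic shift of the data qubits preserves the row spaces of both check matrices
`H_X = [A | B]` and `H_Z = [Bᵀ | Aᵀ]`, and hence is a logical operation of any bivariate
bicycle code.) -/
theorem cyclic_shift_commutes_with_BB_check_matrices
    (ℓ m : ℕ) [NeZero ℓ] [NeZero m]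
    (A B : Matrix (Fin ℓ × Fin m) (Fin ℓ × Fin m) (ZMod 2))
    (sA sB : Finset (ℕ × ℕ))
    (hA : A = ∑ p ∈ sA, xMat ℓ m ^ p.1 * yMat ℓ m ^ p.2)
    (hB : B = ∑ p ∈ sB, xMat ℓ m ^ p.1 * yMat ℓ m ^ p.2)
    (i j : ℕ) (hi : i < ℓ) (hj : j < m) :
    Matrix.fromCols A B *
        Matrix.fromBlocks (xMat ℓ m ^ i * yMat ℓ m ^ j) 0 0 (xMat ℓ m ^ i * yMat ℓ m ^ j)
      = (xMat ℓ m ^ i * yMat ℓ m ^ j) * Matrix.fromCols A B ∧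
    Matrix.fromCols Bᵀ Aᵀ *
        Matrix.fromBlocks (xMat ℓ m ^ i * yMat ℓ m ^ j) 0 0 (xMat ℓ m ^ i * yMat ℓ m ^ j)
      = (xMat ℓ m ^ i * yMat ℓ m ^ j) * Matrix.fromCols Bᵀ Aᵀ := by
  have hAc := commute_sum ℓ m i j sA
  have hBc := commute_sum ℓ m i j sB
  have hAt := commute_sum_t ℓ m i j sA
  have hBt := commute_sum_t ℓ m i j sB
  rw [← hA] at hAc hAt
  rw [← hB] at hBc hBt
  constructor <;>
    rw [Matrix.fromCols_mul_fromBlocks, Matrix.mul_fromCols] <;>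
    simp only [Matrix.mul_zero, add_zero, zero_add]
  · rw [← hAc.eq, ← hBc.eq]
  · rw [← hBt.eq, ← hAt.eq]
end
end

section
/- Over F₂ = ZMod 2, let x = S_ℓ ⊗ I_m and y = I_ℓ ⊗ S_m, and let A and B each be a finite sum of monomials x^a y^b. Suppose there exist i, j such that the monomial M = x^i y^j satisfies M·A = Bᵀ and M·B = Aᵀ. Then M·[A | B] = [Bᵀ | Aᵀ], and since M is an invertible (permutation) matrix, the F₂-row spaces of H_X = [A | B] and H_Z = [Bᵀ | Aᵀ] coincide. Hence the corresponding bivariate bicycle code is self-orthogonal (its X- and Z-stabilizer spaces are equal). -/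
open Matrix Kronecker

noncomputable section

lemma cyc_mul_transpose (k : ℕ) [NeZero k] : cyc k * (cyc k)ᵀ = 1 := by
  ext a b
  simp only [Matrix.mul_apply, Matrix.transpose_apply, cyc, Matrix.one_apply,
    ite_mul, one_mul, zero_mul, Finset.sum_ite_eq, Finset.mem_univ, if_true]
  simp [add_left_inj, eq_comm]

lemma isUnit_xMat (ℓ m : ℕ) [NeZero ℓ] [NeZero m] : IsUnit (xMat ℓ m) := by
  have h : xMat ℓ m * (xMat ℓ m)ᵀ = 1 := by
    rw [xMat, ← Matrix.kroneckerMap_transpose, ← Matrix.mul_kronecker_mul,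
      cyc_mul_transpose, Matrix.transpose_one, Matrix.one_mul, Matrix.one_kronecker_one]
  have := invertibleOfRightInverse _ _ h
  exact isUnit_of_invertible (xMat ℓ m)

lemma isUnit_yMat (ℓ m : ℕ) [NeZero ℓ] [NeZero m] : IsUnit (yMat ℓ m) := by
  have h : yMat ℓ m * (yMat ℓ m)ᵀ = 1 := by
    rw [yMat, ← Matrix.kroneckerMap_transpose, ← Matrix.mul_kronecker_mul,
      cyc_mul_transpose, Matrix.transpose_one, Matrix.one_mul, Matrix.one_kronecker_one]
  have := invertibleOfRightInverse _ _ h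
  exact isUnit_of_invertible (yMat ℓ m)

lemma span_mul_le {n p : Type*} [Fintype n] (M : Matrix n n (ZMod 2))
    (H : Matrix n p (ZMod 2)) :
    Submodule.span (ZMod 2) (Set.range (M * H)) ≤
      Submodule.span (ZMod 2) (Set.range H) := by
  rw [Submodule.span_le]
  rintro _ ⟨r, rfl⟩
  have : (M * H) r = ∑ k, M r k • H k := by
    ext c
    simp [Matrix.mul_apply, Finset.sum_apply]
  rw [this]
  exact Submodule.sum_mem _ fun k _ =>
    Submodule.smul_mem _ _ (Submodule.subset_span ⟨k, rfl⟩)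

lemma span_mul_eq {n p : Type*} [Fintype n] [DecidableEq n] (M : Matrix n n (ZMod 2))
    (hM : IsUnit M) (H : Matrix n p (ZMod 2)) :
    Submodule.span (ZMod 2) (Set.range (M * H)) =
      Submodule.span (ZMod 2) (Set.range H) := by
  refine le_antisymm (span_mul_le M H) ?_
  have hd : IsUnit M.det := (Matrix.isUnit_iff_isUnit_det M).mp hM
  have : H = M⁻¹ * (M * H) := by
    rw [← Matrix.mul_assoc, Matrix.nonsing_inv_mul M hd, Matrix.one_mul]
  conv_lhs => rw [this]
  exact span_mul_le _ _

/-- Over `F₂ = ZMod 2`, let `x = S_ℓ ⊗ I_m` and `y = I_ℓ ⊗ S_m`, and let `A` and `B` each be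
a finite sum of monomials `x^a y^b`.  Suppose there exist `i, j` such that the monomial
`M = x^i y^j` satisfies `M·A = Bᵀ` and `M·B = Aᵀ`.  Then `M·[A | B] = [Bᵀ | Aᵀ]`, and
since `M` is an invertible (permutation) matrix, the `F₂`-row spaces of `H_X = [A | B]`
and `H_Z = [Bᵀ | Aᵀ]` coincide.  Hence the corresponding bivariate bicycle code is
self-orthogonal (its X- and Z-stabilizer spaces are equal). -/
theorem self_orthogonal_BB_code_of_monomial_swap
    (ℓ m : ℕ) [NeZero ℓ] [NeZero m]
    (A B : Matrix (Fin ℓ × Fin m) (Fin ℓ × Fin m) (ZMod 2))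
    (sA sB : Finset (ℕ × ℕ))
    (hA : A = ∑ p ∈ sA, xMat ℓ m ^ p.1 * yMat ℓ m ^ p.2)
    (hB : B = ∑ p ∈ sB, xMat ℓ m ^ p.1 * yMat ℓ m ^ p.2)
    (i j : ℕ)
    (hMA : (xMat ℓ m ^ i * yMat ℓ m ^ j) * A = Bᵀ)
    (hMB : (xMat ℓ m ^ i * yMat ℓ m ^ j) * B = Aᵀ) :
    (xMat ℓ m ^ i * yMat ℓ m ^ j) * Matrix.fromCols A B = Matrix.fromCols Bᵀ Aᵀ ∧
    Submodule.span (ZMod 2) (Set.range (Matrix.fromCols A B)) =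
      Submodule.span (ZMod 2) (Set.range (Matrix.fromCols Bᵀ Aᵀ)) := by
  have hM : IsUnit (xMat ℓ m ^ i * yMat ℓ m ^ j) :=
    ((isUnit_xMat ℓ m).pow i).mul ((isUnit_yMat ℓ m).pow j)
  have h1 : (xMat ℓ m ^ i * yMat ℓ m ^ j) * Matrix.fromCols A B =
      Matrix.fromCols Bᵀ Aᵀ := by
    rw [Matrix.mul_fromCols, hMA, hMB]
  exact ⟨h1, by rw [← h1, span_mul_eq _ hM]⟩
end
end
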